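/- Let P ⊆ ℂ be a parallelogram-free pattern with |P| ≥ 3. Then there is a constant c = c(P) > 0 such that for all n ≥ |P|, S_P^∦(n) ≥ c·n·log n; that is, for every n ≥ |P| there exists a parallelogram-free set A ⊆ ℂ with |A| = n and S_P(A) ≥ c·n·log n. -/

import Mathlib

open MeasureTheory

noncomputable section

/-- `Q` is a similar copy of `P`: the image of `P` under an
orientation-preserving similarity `p ↦ z·p + w`, `z ≠ 0`. -/
def SimilarFin (P Q : Finset ℂ) : Prop :=
  ∃ z w : ℂ, z ≠ 0 ∧ (Q : Set ℂ) = (fun p => z * p + w) '' (P : Set ℂ)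

/-- `SP P Q` is the number of subsets of `Q` that are similar copies of `P`. -/
def SP (P Q : Finset ℂ) : ℕ :=
  letI := Classical.decPred (SimilarFin P)
  (Q.powerset.filter (SimilarFin P)).card

/-- `Q` has no `m` points on a line: every collinear subset has at most `m - 1` points. -/
def NoMOnLine (m : ℕ) (Q : Finset ℂ) : Prop :=
  ∀ S ⊆ Q, Collinear ℝ (S : Set ℂ) → S.card ≤ m - 1

/-- `Q` has `m` points on a line. -/
def HasMOnLine (m : ℕ) (Q : Finset ℂ) : Prop :=
  ∃ S ⊆ Q, S.card = m ∧ Collinear ℝ (S : Set ℂ)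

/-- The number of orientation-preserving isometries of `ℂ` mapping `P` onto itself,
i.e. maps `p ↦ u·p + w` with `|u| = 1` fixing `P` setwise. -/
def IsoPlusCard (P : Finset ℂ) : ℕ :=
  {uw : ℂ × ℂ | ‖uw.1‖ = 1 ∧
    (fun p => uw.1 * p + uw.2) '' (P : Set ℂ) = (P : Set ℂ)}.ncard

/-- The index of `A` with respect to the pattern `P`. -/
def indexP (P A : Finset ℂ) : ℝ :=
  Real.log ((IsoPlusCard P : ℝ) * SP P A + A.card) / Real.log A.card

/-- `SPnm P n m` : the maximum of `SP P Q` over `n`-point sets `Q`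
with no `m` points on a line. -/
def SPnm (P : Finset ℂ) (n m : ℕ) : ℕ :=
  sSup {k | ∃ Q : Finset ℂ, Q.card = n ∧ NoMOnLine m Q ∧ SP P Q = k}

/-- `SPn P n` : the maximum of `SP P Q` over all `n`-point sets `Q`. -/
def SPn (P : Finset ℂ) (n : ℕ) : ℕ :=
  sSup {k | ∃ Q : Finset ℂ, Q.card = n ∧ SP P Q = k}

/-- The Minkowski sum `B + C` of two finite sets of complex numbers. -/
def minkSum (B C : Finset ℂ) : Finset ℂ :=
  letI := Classical.decEq ℂ
  Finset.image₂ (· + ·) B C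

/-- `Q` contains four pairwise distinct points forming a parallelogram. -/
def HasParallelogram (Q : Finset ℂ) : Prop :=
  ∃ p₁ ∈ Q, ∃ p₂ ∈ Q, ∃ p₃ ∈ Q, ∃ p₄ ∈ Q,
    p₁ ≠ p₂ ∧ p₁ ≠ p₃ ∧ p₁ ≠ p₄ ∧ p₂ ≠ p₃ ∧ p₂ ≠ p₄ ∧ p₃ ≠ p₄ ∧
    p₂ - p₁ = p₄ - p₃

/-- `Q` is parallelogram-free: no 3 collinear points and no parallelogram. -/
def ParallelogramFree (Q : Finset ℂ) : Prop :=
  (∀ S ⊆ Q, Collinear ℝ (S : Set ℂ) → S.card ≤ 2) ∧ ¬ HasParallelogram Q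

/-- The set `Q(P, A, u, v) = ⋃_{p ∈ P} (u·p + (v·p − p + 1)·A)`. -/
def Qset (P A : Finset ℂ) (u v : ℂ) : Finset ℂ :=
  letI := Classical.decEq ℂ
  P.biUnion fun p => A.image fun a => u * p + (v * p - p + 1) * a

/-- The vertex set of the regular `k`-gon. -/
def Rpoly (k : ℕ) : Finset ℂ :=
  letI := Classical.decEq ℂ
  (Finset.range k).image fun j : ℕ => Complex.exp (2 * Real.pi * Complex.I * (j : ℂ) / (k : ℂ))

/-- `ω = e^{2πi/3}`. -/
def omega3 : ℂ := Complex.exp (2 * Real.pi * Complex.I / 3)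

/-- The vertex set `{1, ω, ω²}` of an equilateral triangle. -/
def triEq : Finset ℂ :=
  letI := Classical.decEq ℂ
  {1, omega3, omega3 ^ 2}

open Complex

local notation "conj'" => (starRingEnd ℂ)

/-- An ℂ-affine function on ℂ×ℂ is analytic over ℝ. -/
lemma analytic_affine (a b c : ℂ) :
    AnalyticOnNhd ℝ (fun x : ℂ × ℂ => a * x.1 + b * x.2 + c) Set.univ := by
  apply AnalyticOnNhd.add
  apply AnalyticOnNhd.add
  · exact (analyticOnNhd_const (v := a)).mul analyticOnNhd_fst
  · exact (analyticOnNhd_const (v := b)).mul analyticOnNhd_snd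
  · exact analyticOnNhd_const

lemma analytic_conj {f : ℂ × ℂ → ℂ} (hf : AnalyticOnNhd ℝ f Set.univ) :
    AnalyticOnNhd ℝ (fun x => conj' (f x)) Set.univ :=
  (Complex.conjCLE.toContinuousLinearMap).comp_analyticOnNhd hf

lemma analytic_im {f : ℂ × ℂ → ℂ} (hf : AnalyticOnNhd ℝ f Set.univ) :
    AnalyticOnNhd ℝ (fun x => (f x).im) Set.univ :=
  Complex.imCLM.comp_analyticOnNhd hf

/-- Complement of the zero set of a not-identically-zero analytic function is open and dense. -/
lemma dense_ne_zero {F : Type*} [NormedAddCommGroup F] [NormedSpace ℝ F]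
    {g : ℂ × ℂ → F} (hg : AnalyticOnNhd ℝ g Set.univ) (hne : ∃ x, g x ≠ 0) :
    IsOpen {x | g x ≠ 0} ∧ Dense {x | g x ≠ 0} := by
  constructor
  · have hc : Continuous g := continuousOn_univ.mp hg.continuousOn
    exact isOpen_ne.preimage hc
  · rw [dense_iff_inter_open]
    rintro U hU ⟨x₀, hx₀⟩
    by_contra h
    push_neg at h
    have hz : ∀ y ∈ U, g y = 0 := by
      intro y hy
      by_contra hgy
      exact Set.eq_empty_iff_forall_notMem.mp h y ⟨hy, hgy⟩
    have hconn : IsPreconnected (Set.univ : Set (ℂ × ℂ)) :=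
      (convex_univ : Convex ℝ (Set.univ : Set (ℂ × ℂ))).isPreconnected
    have := hg.eqOn_zero_of_preconnected_of_eventuallyEq_zero hconn (Set.mem_univ x₀)
      (Filter.eventuallyEq_of_mem (hU.mem_nhds hx₀) hz)
    obtain ⟨x, hx⟩ := hne
    exact hx (this (Set.mem_univ x))


/-- One-variable classification: if `Im(conj(ασ+γ)·(α'σ+γ')) = 0` for all `σ`,
then either `α = γ = 0` or `(α',γ')` is a real multiple of `(α,γ)`. -/
lemma L1 (α γ α' γ' : ℂ)
    (h : ∀ σ : ℂ, (conj' (α * σ + γ) * (α' * σ + γ')).im = 0) :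
    (α = 0 ∧ γ = 0) ∨ ∃ l : ℝ, α' = l * α ∧ γ' = l * γ := by
  have h' : ∀ σ : ℂ, conj' (conj' (α * σ + γ) * (α' * σ + γ'))
      = conj' (α * σ + γ) * (α' * σ + γ') := fun σ => Complex.conj_eq_iff_im.mpr (h σ)
  have e0 := h' 0
  have e1 := h' 1
  have em1 := h' (-1)
  have ei := h' I
  simp only [map_mul, map_add, map_one, map_neg, Complex.conj_conj, Complex.conj_I,
    mul_zero, mul_one, mul_neg, add_zero, zero_add] at e0 e1 em1 ei
  have fA : α * conj' α' = conj' α * α' := by linear_combination (e1 + em1) / 2 - e0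
  have fI : I * (α * conj' γ' - γ * conj' α' + conj' α * γ' - conj' γ * α') = 0 := by
    linear_combination ei + (I * I) * fA - e0
  have fY : α * conj' γ' - γ * conj' α' + conj' α * γ' - conj' γ * α' = 0 :=
    (mul_eq_zero.mp fI).resolve_left Complex.I_ne_zero
  have f3 : α * conj' γ' = conj' γ * α' := by linear_combination (e1 - em1) / 4 + fY / 2
  have f4 : γ * conj' α' = conj' α * γ' := by linear_combination (e1 - em1) / 4 - fY / 2
  by_cases hα : α = 0
  · by_cases hγ : γ = 0
    · exact Or.inl ⟨hα, hγ⟩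
    · have hcγ : conj' γ ≠ 0 := by simpa using hγ
      have hα' : α' = 0 := by
        have : conj' γ * α' = 0 := by rw [← f3, hα]; ring
        exact (mul_eq_zero.mp this).resolve_left hcγ
      refine Or.inr ⟨(conj' γ * γ').re / Complex.normSq γ, by rw [hα, mul_zero]; exact hα', ?_⟩
      have hB : (((conj' γ * γ').re : ℝ) : ℂ) = conj' γ * γ' := by
        rw [← Complex.conj_eq_iff_re, map_mul, Complex.conj_conj]
        exact e0
      have hns : (Complex.normSq γ : ℂ) ≠ 0 := by
        simpa [Complex.normSq_eq_zero] using hγ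
      rw [Complex.ofReal_div, div_mul_eq_mul_div, eq_div_iff hns, ← Complex.mul_conj]
      linear_combination -γ * hB
  · have hcα : conj' α ≠ 0 := by simpa using hα
    set l : ℝ := (conj' α * α').re / Complex.normSq α with hl
    have hB : (((conj' α * α').re : ℝ) : ℂ) = conj' α * α' := by
      rw [← Complex.conj_eq_iff_re, map_mul, Complex.conj_conj]
      exact fA
    have hns : (Complex.normSq α : ℂ) ≠ 0 := by
      simpa [Complex.normSq_eq_zero] using hα
    have hα' : α' = (l : ℂ) * α := by
      rw [hl, Complex.ofReal_div, div_mul_eq_mul_div, eq_div_iff hns, ← Complex.mul_conj]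
      linear_combination -α * hB
    refine Or.inr ⟨l, hα', ?_⟩
    have hconj : conj' α' = (l : ℂ) * conj' α := by
      rw [hα', map_mul, Complex.conj_ofReal]
    have : conj' α * γ' = conj' α * ((l : ℂ) * γ) := by
      rw [← f4, hconj]; ring
    exact mul_left_cancel₀ hcα this


/-- Two-variable version. -/
lemma L2 (α β γ α' β' γ' : ℂ)
    (h : ∀ s t : ℂ, (conj' (α * s + β * t + γ) * (α' * s + β' * t + γ')).im = 0) :
    (α = 0 ∧ β = 0 ∧ γ = 0) ∨ ∃ l : ℝ, α' = l * α ∧ γ' = l * γ := by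
  rcases L1 α γ α' γ' (fun σ => by simpa using h σ 0) with ⟨hα, hγ⟩ | hr
  · subst hα; subst hγ
    rcases L1 β 0 β' γ' (fun σ => by simpa using h 0 σ) with ⟨hβ, -⟩ | ⟨l, hβ', hγ'⟩
    · exact Or.inl ⟨rfl, hβ, rfl⟩
    · rw [mul_zero] at hγ'
      rcases L1 0 β α' (β' + γ') (fun σ => by
          have := h σ 1; simpa [mul_comm, add_assoc] using this) with ⟨-, hβ⟩ | ⟨l', hα', -⟩
      · exact Or.inl ⟨rfl, hβ, rfl⟩
      · rw [mul_zero] at hα'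
        exact Or.inr ⟨0, by simp [hα'], by simp [hγ']⟩
  · exact Or.inr hr

lemma im_eq_zero_of_collinear {x y z : ℂ} (h : Collinear ℝ ({x, y, z} : Set ℂ)) :
    (conj' (y - x) * (z - x)).im = 0 := by
  rw [collinear_iff_exists_forall_eq_smul_vadd] at h
  obtain ⟨p₀, v, hv⟩ := h
  obtain ⟨rx, hx⟩ := hv x (by simp)
  obtain ⟨ry, hy⟩ := hv y (by simp)
  obtain ⟨rz, hz⟩ := hv z (by simp)
  have hyx : y - x = ((ry - rx : ℝ) : ℂ) * v := by
    rw [hx, hy]; simp only [vadd_eq_add, Complex.real_smul]; push_cast; ring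
  have hzx : z - x = ((rz - rx : ℝ) : ℂ) * v := by
    rw [hx, hz]; simp only [vadd_eq_add, Complex.real_smul]; push_cast; ring
  rw [hyx, hzx, map_mul, Complex.conj_ofReal]
  have : ((ry - rx : ℝ) : ℂ) * conj' v * (((rz - rx : ℝ) : ℂ) * v)
      = ((ry - rx : ℝ) : ℂ) * ((rz - rx : ℝ) : ℂ) * ((Complex.normSq v : ℝ) : ℂ) := by
    rw [show ((Complex.normSq v : ℝ) : ℂ) = v * conj' v from (Complex.mul_conj v).symm]
    ring
  rw [this]
  simp [← Complex.ofReal_mul]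

lemma collinear_of_real_smul {x y z : ℂ} (l : ℝ) (h : z - x = l • (y - x)) :
    Collinear ℝ ({x, y, z} : Set ℂ) := by
  rw [collinear_iff_exists_forall_eq_smul_vadd]
  refine ⟨x, y - x, ?_⟩
  rintro p (rfl | rfl | rfl)
  · exact ⟨0, by simp⟩
  · exact ⟨1, by simp⟩
  · exact ⟨l, by rw [← h]; simp⟩

lemma SimilarFin.card_eq {P T : Finset ℂ} (h : SimilarFin P T) : T.card = P.card := by
  obtain ⟨z, w, hz, hT⟩ := h
  have hinj : Function.Injective (fun p : ℂ => z * p + w) := by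
    intro a b hab
    simpa [hz] using hab
  have := congrArg Set.ncard hT
  rwa [Set.ncard_coe_finset, Set.ncard_image_of_injective _ hinj, Set.ncard_coe_finset] at this

lemma SimilarFin.map {P T : Finset ℂ} (h : SimilarFin P T) (z w : ℂ) (hz : z ≠ 0) :
    SimilarFin P (T.image (fun x => z * x + w)) := by
  classical
  obtain ⟨z', w', hz', hT⟩ := h
  refine ⟨z * z', z * w' + w, mul_ne_zero hz hz', ?_⟩
  rw [Finset.coe_image, hT, ← Set.image_comp]
  congr 1
  ext p
  simp only [Set.mem_image, Function.comp_apply]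
  ring

lemma similar_refl (P : Finset ℂ) : SimilarFin P P :=
  ⟨1, 0, one_ne_zero, by simp⟩

lemma SP_mono {P A B : Finset ℂ} (h : A ⊆ B) : SP P A ≤ SP P B := by
  classical
  unfold SP
  apply Finset.card_le_card
  apply Finset.filter_subset_filter
  intro T hT
  rw [Finset.mem_powerset] at hT ⊢
  exact hT.trans h

lemma one_le_SP_self (P : Finset ℂ) : 1 ≤ SP P P := by
  classical
  unfold SP
  rw [Nat.one_le_iff_ne_zero, ← Nat.pos_iff_ne_zero, Finset.card_pos]
  exact ⟨P, Finset.mem_filter.mpr ⟨Finset.mem_powerset.mpr (Finset.Subset.refl P), similar_refl P⟩⟩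


/-- three distinct elements give a collinear 3-subset contradiction -/
lemma no3_aux {Q : Finset ℂ} (hQ : ∀ S ⊆ Q, Collinear ℝ (S : Set ℂ) → S.card ≤ 2)
    {x y z : ℂ} (hx : x ∈ Q) (hy : y ∈ Q) (hz : z ∈ Q)
    (hxy : x ≠ y) (hxz : x ≠ z) (hyz : y ≠ z)
    (hcol : Collinear ℝ ({x, y, z} : Set ℂ)) : False := by
  classical
  have hsub : ({x, y, z} : Finset ℂ) ⊆ Q := by
    intro w hw
    simp only [Finset.mem_insert, Finset.mem_singleton] at hw
    rcases hw with rfl | rfl | rfl <;> assumption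
  have hcard : ({x, y, z} : Finset ℂ).card = 3 := by
    rw [Finset.card_insert_of_notMem (by simp [hxy, hxz]),
      Finset.card_insert_of_notMem (by simp [hyz]), Finset.card_singleton]
  have := hQ _ hsub (by simpa using hcol)
  omega

/-- The "point" function: `pt (a,p) (s,t) = s·p + t·a·p + a`. -/
def pt (q : ℂ × ℂ) (x : ℂ × ℂ) : ℂ := q.2 * x.1 + q.1 * q.2 * x.2 + q.1

/-- Non-vanishing for collinearity conditions. -/
lemma collin_nonvanish {P A : Finset ℂ} (hPf : ParallelogramFree P)
    (hAf : ParallelogramFree A) {q1 q2 q3 : ℂ × ℂ}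
    (h1 : q1 ∈ A ×ˢ P) (h2 : q2 ∈ A ×ˢ P) (h3 : q3 ∈ A ×ˢ P)
    (h12 : q1 ≠ q2) (h13 : q1 ≠ q3) (h23 : q2 ≠ q3) :
    ∃ x : ℂ × ℂ, (conj' (pt q2 x - pt q1 x) * (pt q3 x - pt q1 x)).im ≠ 0 := by
  by_contra hcon
  push_neg at hcon
  have key : ∀ s t : ℂ, (conj' ((q2.2 - q1.2) * s + (q2.1 * q2.2 - q1.1 * q1.2) * t
      + (q2.1 - q1.1)) * ((q3.2 - q1.2) * s + (q3.1 * q3.2 - q1.1 * q1.2) * t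
      + (q3.1 - q1.1))).im = 0 := by
    intro s t
    have h := hcon (s, t)
    have e2 : pt q2 (s, t) - pt q1 (s, t) = (q2.2 - q1.2) * s
        + (q2.1 * q2.2 - q1.1 * q1.2) * t + (q2.1 - q1.1) := by simp [pt]; ring
    have e3 : pt q3 (s, t) - pt q1 (s, t) = (q3.2 - q1.2) * s
        + (q3.1 * q3.2 - q1.1 * q1.2) * t + (q3.1 - q1.1) := by simp [pt]; ring
    rw [e2, e3] at h
    exact h
  rcases L2 _ _ _ _ _ _ key with ⟨hp, -, ha⟩ | ⟨l, hp, ha⟩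
  · exact h12 (Prod.ext (by linear_combination -ha) (by linear_combination -hp))
  · rw [Finset.mem_product] at h1 h2 h3
    by_cases hl0 : l = 0
    · rw [hl0] at hp ha
      push_cast at hp ha
      exact h13 (Prod.ext (by linear_combination -ha) (by linear_combination -hp))
    by_cases hl1 : l = 1
    · rw [hl1] at hp ha
      push_cast at hp ha
      exact h23 (Prod.ext (by linear_combination -ha) (by linear_combination -hp))
    by_cases hpp : q1.2 = q2.2
    · -- all three p's equal; three distinct collinear points in A
      have hp31 : q3.2 = q1.2 := by
        rw [← hpp] at hp
        have : (q3.2 - q1.2) = 0 := by rw [hp]; ring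
        linear_combination this
      have ha12 : q1.1 ≠ q2.1 := fun h => h12 (Prod.ext h hpp)
      have ha13 : q1.1 ≠ q3.1 := fun h => h13 (Prod.ext h hp31.symm)
      have ha23 : q2.1 ≠ q3.1 := fun h => h23 (Prod.ext h (hpp ▸ hp31).symm)
      have hcol : Collinear ℝ ({q1.1, q2.1, q3.1} : Set ℂ) :=
        collinear_of_real_smul l (by rw [Complex.real_smul]; linear_combination ha)
      exact no3_aux hAf.1 h1.1 h2.1 h3.1 ha12 ha13 ha23 hcol
    · -- p1 ≠ p2: three distinct collinear points in P
      have hlC0 : (l : ℂ) ≠ 0 := by exact_mod_cast hl0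
      have hlC1 : (l : ℂ) ≠ 1 := by exact_mod_cast hl1
      have hppC : q2.2 - q1.2 ≠ 0 := sub_ne_zero.mpr (fun h => hpp h.symm)
      have hp13 : q1.2 ≠ q3.2 := by
        intro h
        apply hl0
        have : (l : ℂ) * (q2.2 - q1.2) = 0 := by linear_combination -hp - h
        exact_mod_cast (mul_eq_zero.mp this).resolve_right hppC
      have hp23 : q2.2 ≠ q3.2 := by
        intro h
        apply hl1
        have h0 : ((l : ℂ) - 1) * (q2.2 - q1.2) = 0 := by linear_combination -hp - h
        have h1 := (mul_eq_zero.mp h0).resolve_right hppC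
        have : (l : ℂ) = 1 := by linear_combination h1
        exact_mod_cast this
      have hcol : Collinear ℝ ({q1.2, q2.2, q3.2} : Set ℂ) :=
        collinear_of_real_smul l (by rw [Complex.real_smul]; linear_combination hp)
      exact no3_aux hPf.1 h1.2 h2.2 h3.2 (fun h => hpp h) hp13 hp23 hcol

/-- Non-vanishing for parallelogram conditions. -/
lemma pgram_nonvanish {P A : Finset ℂ} (hPf : ParallelogramFree P)
    (hAf : ParallelogramFree A) {q1 q2 q3 q4 : ℂ × ℂ}
    (h1 : q1 ∈ A ×ˢ P) (h2 : q2 ∈ A ×ˢ P) (h3 : q3 ∈ A ×ˢ P) (h4 : q4 ∈ A ×ˢ P)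
    (h12 : q1 ≠ q2) (h13 : q1 ≠ q3) (h14 : q1 ≠ q4)
    (h23 : q2 ≠ q3) (h24 : q2 ≠ q4) (h34 : q3 ≠ q4)
    (hα : q2.2 - q1.2 - q4.2 + q3.2 = 0)
    (hβ : q2.1 * q2.2 - q1.1 * q1.2 - q4.1 * q4.2 + q3.1 * q3.2 = 0)
    (hγ : q2.1 - q1.1 - q4.1 + q3.1 = 0) : False := by
  rw [Finset.mem_product] at h1 h2 h3 h4
  obtain ⟨ha1, hp1⟩ := h1; obtain ⟨ha2, hp2⟩ := h2
  obtain ⟨ha3, hp3⟩ := h3; obtain ⟨ha4, hp4⟩ := h4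
  by_cases e12 : q1.2 = q2.2
  · -- p1 = p2 hence p3 = p4
    have e34 : q3.2 = q4.2 := by linear_combination hα + e12
    have na12 : q1.1 ≠ q2.1 := fun h => h12 (Prod.ext h e12)
    have na34 : q3.1 ≠ q4.1 := fun h => h34 (Prod.ext h e34)
    by_cases e13 : q1.2 = q3.2
    · -- all p equal: parallelogram in A
      have e14 : q1.2 = q4.2 := e13.trans e34
      have na13 : q1.1 ≠ q3.1 := fun h => h13 (Prod.ext h e13)
      have na14 : q1.1 ≠ q4.1 := fun h => h14 (Prod.ext h e14)
      have na23 : q2.1 ≠ q3.1 := fun h => h23 (Prod.ext h (e12.symm.trans e13))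
      have na24 : q2.1 ≠ q4.1 := fun h => h24 (Prod.ext h (e12.symm.trans e14))
      exact hAf.2 ⟨q1.1, ha1, q2.1, ha2, q3.1, ha3, q4.1, ha4,
        na12, na13, na14, na23, na24, na34, by linear_combination hγ⟩
    · -- p1 = p2 ≠ p3 = p4 : impossible
      have key : (q1.2 - q3.2) * (q2.1 - q1.1) = 0 := by
        linear_combination hβ + q2.1 * e12 - q4.1 * e34 - q3.2 * hγ
      rcases mul_eq_zero.mp key with h | h
      · exact e13 (by linear_combination h)
      · exact na12 (by linear_combination -h)
  by_cases e13 : q1.2 = q3.2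
  · -- p1 = p3, p2 = p4
    have e24 : q2.2 = q4.2 := by linear_combination hα + e13
    have : (q2.2 - q1.2) * (q2.1 - q4.1) = 0 := by
      linear_combination hβ - q4.1 * e24 + q3.1 * e13 - q1.2 * hγ
    rcases mul_eq_zero.mp this with h | h
    · exact e12 (by linear_combination -h)
    · have ea : q2.1 = q4.1 := by linear_combination h
      have ea13 : q1.1 = q3.1 := by linear_combination ea - hγ
      exact h13 (Prod.ext ea13 e13)
  by_cases e14 : q1.2 = q4.2
  · by_cases e23 : q2.2 = q3.2
    · exact e12 (by linear_combination (e14 - hα - e23) / 2)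
    · -- p1 is the midpoint of p2, p3
      have key : q3.2 - q2.2 = (2 : ℝ) • (q1.2 - q2.2) := by
        rw [Complex.real_smul]; push_cast; linear_combination hα - e14
      have hcol := collinear_of_real_smul 2 key
      exact no3_aux hPf.1 hp2 hp1 hp3 (fun h => e12 h.symm) (fun h => e23 h)
        (fun h => e13 h) hcol
  by_cases e24 : q2.2 = q4.2
  · exact e13 (by linear_combination e24 - hα)
  by_cases e23 : q2.2 = q3.2
  · -- p2 is the midpoint of p1, p4
    have key : q4.2 - q1.2 = (2 : ℝ) • (q2.2 - q1.2) := by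
      rw [Complex.real_smul]; push_cast; linear_combination -hα - e23
    have hcol := collinear_of_real_smul 2 key
    exact no3_aux hPf.1 hp1 hp2 hp4 (fun h => e12 h) (fun h => e14 h)
      (fun h => e24 h) hcol
  by_cases e34 : q3.2 = q4.2
  · exact e12 (by linear_combination e34 - hα)
  · exact hPf.2 ⟨q1.2, hp1, q2.2, hp2, q3.2, hp3, q4.2, hp4,
      e12, e13, e14, e23, e24, e34, by linear_combination hα⟩


lemma affine_dense (a b c : ℂ) (h : ¬(a = 0 ∧ b = 0 ∧ c = 0)) :
    IsOpen {x : ℂ × ℂ | a * x.1 + b * x.2 + c ≠ 0} ∧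
      Dense {x : ℂ × ℂ | a * x.1 + b * x.2 + c ≠ 0} := by
  apply dense_ne_zero (analytic_affine a b c)
  by_cases hc : c = 0
  · by_cases hb : b = 0
    · have ha : a ≠ 0 := fun ha => h ⟨ha, hb, hc⟩
      exact ⟨(1, 0), by simp [hb, hc, ha]⟩
    · exact ⟨(0, 1), by simp [hb, hc]⟩
  · exact ⟨(0, 0), by simp [hc]⟩

lemma pt_sub (q q' : ℂ × ℂ) (x : ℂ × ℂ) :
    pt q x - pt q' x = (q.2 - q'.2) * x.1 + (q.1 * q.2 - q'.1 * q'.2) * x.2 + (q.1 - q'.1) := by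
  simp [pt]; ring

lemma exists_good (P A : Finset ℂ) (hPf : ParallelogramFree P) (hAf : ParallelogramFree A) :
    ∃ x : ℂ × ℂ,
      (∀ q ∈ A ×ˢ P, ∀ q' ∈ A ×ˢ P, q ≠ q' → pt q x ≠ pt q' x) ∧
      (∀ p ∈ P, x.2 * p + 1 ≠ 0) ∧
      (∀ a ∈ A, x.1 + x.2 * a ≠ 0) ∧
      (∀ q1 ∈ A ×ˢ P, ∀ q2 ∈ A ×ˢ P, ∀ q3 ∈ A ×ˢ P, q1 ≠ q2 → q1 ≠ q3 → q2 ≠ q3 →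
        (conj' (pt q2 x - pt q1 x) * (pt q3 x - pt q1 x)).im ≠ 0) ∧
      (∀ q1 ∈ A ×ˢ P, ∀ q2 ∈ A ×ˢ P, ∀ q3 ∈ A ×ˢ P, ∀ q4 ∈ A ×ˢ P,
        q1 ≠ q2 → q1 ≠ q3 → q1 ≠ q4 → q2 ≠ q3 → q2 ≠ q4 → q3 ≠ q4 →
        pt q2 x - pt q1 x ≠ pt q4 x - pt q3 x) := by
  classical
  set T := A ×ˢ P with hT
  let S1 : ↥T × ↥T → Set (ℂ × ℂ) := fun i =>
    {x | (i.1 : ℂ × ℂ) ≠ (i.2 : ℂ × ℂ) → pt i.1 x ≠ pt i.2 x}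
  let S2 : ↥P → Set (ℂ × ℂ) := fun p => {x | x.2 * (p : ℂ) + 1 ≠ 0}
  let S3 : ↥A → Set (ℂ × ℂ) := fun a => {x | x.1 + x.2 * (a : ℂ) ≠ 0}
  let S4 : ↥T × ↥T × ↥T → Set (ℂ × ℂ) := fun i =>
    {x | (i.1 : ℂ × ℂ) ≠ (i.2.1 : ℂ × ℂ) → (i.1 : ℂ × ℂ) ≠ (i.2.2 : ℂ × ℂ) →
      (i.2.1 : ℂ × ℂ) ≠ (i.2.2 : ℂ × ℂ) →
      (conj' (pt i.2.1 x - pt i.1 x) * (pt i.2.2 x - pt i.1 x)).im ≠ 0}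
  let S5 : (↥T × ↥T) × (↥T × ↥T) → Set (ℂ × ℂ) := fun i =>
    {x | (i.1.1 : ℂ × ℂ) ≠ (i.1.2 : ℂ × ℂ) → (i.1.1 : ℂ × ℂ) ≠ (i.2.1 : ℂ × ℂ) →
      (i.1.1 : ℂ × ℂ) ≠ (i.2.2 : ℂ × ℂ) → (i.1.2 : ℂ × ℂ) ≠ (i.2.1 : ℂ × ℂ) →
      (i.1.2 : ℂ × ℂ) ≠ (i.2.2 : ℂ × ℂ) → (i.2.1 : ℂ × ℂ) ≠ (i.2.2 : ℂ × ℂ) →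
      pt i.1.2 x - pt i.1.1 x ≠ pt i.2.2 x - pt i.2.1 x}
  have hS1 : ∀ i, IsOpen (S1 i) ∧ Dense (S1 i) := by
    rintro ⟨q, q'⟩
    by_cases hqq : (q : ℂ × ℂ) = (q' : ℂ × ℂ)
    · have : S1 (q, q') = Set.univ := by
        apply Set.eq_univ_of_forall
        intro x
        simp only [S1, Set.mem_setOf_eq]
        intro hne
        exact absurd hqq hne
      rw [this]
      exact ⟨isOpen_univ, dense_univ⟩
    · have heq : S1 (q, q') = {x : ℂ × ℂ | ((q : ℂ × ℂ).2 - (q' : ℂ × ℂ).2) * x.1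
          + ((q : ℂ × ℂ).1 * (q : ℂ × ℂ).2 - (q' : ℂ × ℂ).1 * (q' : ℂ × ℂ).2) * x.2
          + ((q : ℂ × ℂ).1 - (q' : ℂ × ℂ).1) ≠ 0} := by
        ext x
        simp only [S1, Set.mem_setOf_eq]
        rw [← pt_sub]
        constructor
        · intro h' hsub
          exact h' hqq (sub_eq_zero.mp hsub)
        · intro h' _ hpt
          exact h' (by rw [hpt]; ring)
      rw [heq]
      apply affine_dense
      rintro ⟨hα, -, hγ⟩
      exact hqq (Prod.ext (by linear_combination hγ) (by linear_combination hα))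
  have hptA : ∀ q : ℂ × ℂ, AnalyticOnNhd ℝ (fun x => pt q x) Set.univ := fun q =>
    analytic_affine q.2 (q.1 * q.2) q.1
  have hS2 : ∀ i, IsOpen (S2 i) ∧ Dense (S2 i) := by
    rintro ⟨p, hp⟩
    have heq : S2 ⟨p, hp⟩ = {x : ℂ × ℂ | (0 : ℂ) * x.1 + p * x.2 + 1 ≠ 0} := by
      ext x
      simp only [S2, Set.mem_setOf_eq]
      constructor
      · intro h' h''; exact h' (by linear_combination h'')
      · intro h' h''; exact h' (by linear_combination h'')
    rw [heq]
    exact affine_dense _ _ _ (by rintro ⟨-, -, h1⟩; exact one_ne_zero h1)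
  have hS3 : ∀ i, IsOpen (S3 i) ∧ Dense (S3 i) := by
    rintro ⟨a, ha⟩
    have heq : S3 ⟨a, ha⟩ = {x : ℂ × ℂ | (1 : ℂ) * x.1 + a * x.2 + 0 ≠ 0} := by
      ext x
      simp only [S3, Set.mem_setOf_eq]
      constructor
      · intro h' h''; exact h' (by linear_combination h'')
      · intro h' h''; exact h' (by linear_combination h'')
    rw [heq]
    exact affine_dense _ _ _ (by rintro ⟨h1, -, -⟩; exact one_ne_zero h1)
  have hS4 : ∀ i, IsOpen (S4 i) ∧ Dense (S4 i) := by
    rintro ⟨q1, q2, q3⟩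
    by_cases h12 : (q1 : ℂ × ℂ) = (q2 : ℂ × ℂ)
    · have : S4 (q1, q2, q3) = Set.univ :=
        Set.eq_univ_of_forall (fun x h' => absurd h12 h')
      rw [this]; exact ⟨isOpen_univ, dense_univ⟩
    by_cases h13 : (q1 : ℂ × ℂ) = (q3 : ℂ × ℂ)
    · have : S4 (q1, q2, q3) = Set.univ :=
        Set.eq_univ_of_forall (fun x _ h' => absurd h13 h')
      rw [this]; exact ⟨isOpen_univ, dense_univ⟩
    by_cases h23 : (q2 : ℂ × ℂ) = (q3 : ℂ × ℂ)
    · have : S4 (q1, q2, q3) = Set.univ :=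
        Set.eq_univ_of_forall (fun x _ _ h' => absurd h23 h')
      rw [this]; exact ⟨isOpen_univ, dense_univ⟩
    · have heq : S4 (q1, q2, q3) = {x : ℂ × ℂ |
          (conj' (pt q2 x - pt q1 x) * (pt q3 x - pt q1 x)).im ≠ 0} := by
        ext x
        simp only [S4, Set.mem_setOf_eq]
        exact ⟨fun h' => h' h12 h13 h23, fun h' _ _ _ => h'⟩
      rw [heq]
      apply dense_ne_zero
      · exact analytic_im ((analytic_conj (((hptA q2).sub (hptA q1)))).mul
          ((hptA q3).sub (hptA q1)))
      · exact collin_nonvanish hPf hAf q1.2 q2.2 q3.2 h12 h13 h23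
  have hS5 : ∀ i, IsOpen (S5 i) ∧ Dense (S5 i) := by
    rintro ⟨⟨q1, q2⟩, q3, q4⟩
    by_cases h12 : (q1 : ℂ × ℂ) = (q2 : ℂ × ℂ)
    · have huniv : S5 ((q1, q2), q3, q4) = Set.univ :=
        Set.eq_univ_of_forall (fun x h' => absurd h12 h')
      rw [huniv]; exact ⟨isOpen_univ, dense_univ⟩
    by_cases h13 : (q1 : ℂ × ℂ) = (q3 : ℂ × ℂ)
    · have huniv : S5 ((q1, q2), q3, q4) = Set.univ :=
        Set.eq_univ_of_forall (fun x _ h' => absurd h13 h')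
      rw [huniv]; exact ⟨isOpen_univ, dense_univ⟩
    by_cases h14 : (q1 : ℂ × ℂ) = (q4 : ℂ × ℂ)
    · have huniv : S5 ((q1, q2), q3, q4) = Set.univ :=
        Set.eq_univ_of_forall (fun x _ _ h' => absurd h14 h')
      rw [huniv]; exact ⟨isOpen_univ, dense_univ⟩
    by_cases h23 : (q2 : ℂ × ℂ) = (q3 : ℂ × ℂ)
    · have huniv : S5 ((q1, q2), q3, q4) = Set.univ :=
        Set.eq_univ_of_forall (fun x _ _ _ h' => absurd h23 h')
      rw [huniv]; exact ⟨isOpen_univ, dense_univ⟩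
    by_cases h24 : (q2 : ℂ × ℂ) = (q4 : ℂ × ℂ)
    · have huniv : S5 ((q1, q2), q3, q4) = Set.univ :=
        Set.eq_univ_of_forall (fun x _ _ _ _ h' => absurd h24 h')
      rw [huniv]; exact ⟨isOpen_univ, dense_univ⟩
    by_cases h34 : (q3 : ℂ × ℂ) = (q4 : ℂ × ℂ)
    · have huniv : S5 ((q1, q2), q3, q4) = Set.univ :=
        Set.eq_univ_of_forall (fun x _ _ _ _ _ h' => absurd h34 h')
      rw [huniv]; exact ⟨isOpen_univ, dense_univ⟩
    · have heq : S5 ((q1, q2), q3, q4) = {x : ℂ × ℂ |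
          ((q2 : ℂ × ℂ).2 - (q1 : ℂ × ℂ).2 - (q4 : ℂ × ℂ).2 + (q3 : ℂ × ℂ).2) * x.1
          + ((q2 : ℂ × ℂ).1 * (q2 : ℂ × ℂ).2 - (q1 : ℂ × ℂ).1 * (q1 : ℂ × ℂ).2
            - (q4 : ℂ × ℂ).1 * (q4 : ℂ × ℂ).2 + (q3 : ℂ × ℂ).1 * (q3 : ℂ × ℂ).2) * x.2
          + ((q2 : ℂ × ℂ).1 - (q1 : ℂ × ℂ).1 - (q4 : ℂ × ℂ).1 + (q3 : ℂ × ℂ).1) ≠ 0} := by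
        ext x
        simp only [S5, Set.mem_setOf_eq]
        constructor
        · intro h' hval
          apply h' h12 h13 h14 h23 h24 h34
          have := sub_eq_zero.mpr (rfl : pt q1.1 x = pt q1.1 x)
          rw [← sub_eq_zero]
          rw [← hval]
          simp only [pt]
          ring
        · intro h' _ _ _ _ _ _ hval
          apply h'
          rw [← sub_eq_zero] at hval
          rw [← hval]
          simp only [pt]
          ring
      rw [heq]
      apply affine_dense
      rintro ⟨hα, hβ, hγ⟩
      exact pgram_nonvanish hPf hAf q1.2 q2.2 q3.2 q4.2 h12 h13 h14 h23 h24 h34 hα hβ hγ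
  have hG1 : IsOpen (⋂ i, S1 i) ∧ Dense (⋂ i, S1 i) :=
    ⟨isOpen_iInter_of_finite (fun i => (hS1 i).1),
      dense_iInter_of_isOpen (fun i => (hS1 i).1) (fun i => (hS1 i).2)⟩
  have hG2 : IsOpen (⋂ i, S2 i) ∧ Dense (⋂ i, S2 i) :=
    ⟨isOpen_iInter_of_finite (fun i => (hS2 i).1),
      dense_iInter_of_isOpen (fun i => (hS2 i).1) (fun i => (hS2 i).2)⟩
  have hG3 : IsOpen (⋂ i, S3 i) ∧ Dense (⋂ i, S3 i) :=
    ⟨isOpen_iInter_of_finite (fun i => (hS3 i).1),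
      dense_iInter_of_isOpen (fun i => (hS3 i).1) (fun i => (hS3 i).2)⟩
  have hG4 : IsOpen (⋂ i, S4 i) ∧ Dense (⋂ i, S4 i) :=
    ⟨isOpen_iInter_of_finite (fun i => (hS4 i).1),
      dense_iInter_of_isOpen (fun i => (hS4 i).1) (fun i => (hS4 i).2)⟩
  have hG5 : IsOpen (⋂ i, S5 i) ∧ Dense (⋂ i, S5 i) :=
    ⟨isOpen_iInter_of_finite (fun i => (hS5 i).1),
      dense_iInter_of_isOpen (fun i => (hS5 i).1) (fun i => (hS5 i).2)⟩
  have hD : Dense ((⋂ i, S1 i) ∩ ((⋂ i, S2 i) ∩ ((⋂ i, S3 i) ∩ ((⋂ i, S4 i) ∩ (⋂ i, S5 i))))) :=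
    hG1.2.inter_of_isOpen_left
      (hG2.2.inter_of_isOpen_left
        (hG3.2.inter_of_isOpen_left
          (hG4.2.inter_of_isOpen_left hG5.2 hG4.1) hG3.1) hG2.1) hG1.1
  obtain ⟨x, hx1, hx2, hx3, hx4, hx5⟩ := hD.nonempty
  refine ⟨x, ?_, ?_, ?_, ?_, ?_⟩
  · intro q hq q' hq' hne
    exact Set.mem_iInter.mp hx1 (⟨q, hq⟩, ⟨q', hq'⟩) hne
  · intro p hp
    exact Set.mem_iInter.mp hx2 ⟨p, hp⟩
  · intro a ha
    exact Set.mem_iInter.mp hx3 ⟨a, ha⟩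
  · intro q1 hq1 q2 hq2 q3 hq3 h12 h13 h23
    exact Set.mem_iInter.mp hx4 (⟨q1, hq1⟩, ⟨q2, hq2⟩, ⟨q3, hq3⟩) h12 h13 h23
  · intro q1 hq1 q2 hq2 q3 hq3 q4 hq4 h12 h13 h14 h23 h24 h34
    exact Set.mem_iInter.mp hx5 ((⟨q1, hq1⟩, ⟨q2, hq2⟩), ⟨q3, hq3⟩, ⟨q4, hq4⟩)
      h12 h13 h14 h23 h24 h34


lemma step (P A : Finset ℂ) (hP3 : 3 ≤ P.card) (hPf : ParallelogramFree P)
    (hAf : ParallelogramFree A) (hA : A.Nonempty) :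
    ∃ B : Finset ℂ, ParallelogramFree B ∧ B.card = P.card * A.card ∧
      P.card * SP P A + A.card ≤ SP P B := by
  classical
  obtain ⟨x, hinj, hzp, hza, hcol, hpar⟩ := exists_good P A hPf hAf
  set f : ℂ × ℂ → ℂ := fun q => pt q x with hf
  set B := (A ×ˢ P).image f with hB
  have hptinj : ∀ q ∈ A ×ˢ P, ∀ q' ∈ A ×ˢ P, f q = f q' → q = q' :=
    fun q hq q' hq' h => by_contra fun hne => hinj q hq q' hq' hne h
  have hfval : ∀ a p : ℂ, f (a, p) = (x.2 * p + 1) * a + x.1 * p := by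
    intro a p; simp only [hf, pt]; ring
  have hfval' : ∀ a p : ℂ, f (a, p) = (x.1 + x.2 * a) * p + a := by
    intro a p; simp only [hf, pt]; ring
  have hmemf : ∀ {a p : ℂ}, a ∈ A → p ∈ P → f (a, p) ∈ B := by
    intro a p ha hp
    exact Finset.mem_image.mpr ⟨(a, p), Finset.mem_product.mpr ⟨ha, hp⟩, rfl⟩
  have hcardB : B.card = P.card * A.card := by
    rw [hB, Finset.card_image_of_injOn (fun q hq q' hq' h =>
      hptinj q (by simpa using hq) q' (by simpa using hq') h),
      Finset.card_product, Nat.mul_comm]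
  have hfree : ParallelogramFree B := by
    constructor
    · intro S hS hcolS
      by_contra hc
      push_neg at hc
      obtain ⟨y1, y2, y3, hy1, hy2, hy3, n12, n13, n23⟩ :=
        Finset.two_lt_card_iff.mp (show 2 < S.card by omega)
      obtain ⟨q1, hq1, hfq1⟩ := Finset.mem_image.mp (hS hy1)
      obtain ⟨q2, hq2, hfq2⟩ := Finset.mem_image.mp (hS hy2)
      obtain ⟨q3, hq3, hfq3⟩ := Finset.mem_image.mp (hS hy3)
      refine hcol q1 hq1 q2 hq2 q3 hq3
        (fun h => n12 (by rw [← hfq1, ← hfq2, h]))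
        (fun h => n13 (by rw [← hfq1, ← hfq3, h]))
        (fun h => n23 (by rw [← hfq2, ← hfq3, h])) ?_
      have : Collinear ℝ ({y1, y2, y3} : Set ℂ) := by
        apply hcolS.subset
        intro w hw
        rcases hw with rfl | rfl | rfl
        · exact hy1
        · exact hy2
        · exact hy3
      have him := im_eq_zero_of_collinear this
      rw [← hfq1, ← hfq2, ← hfq3] at him
      exact him
    · rintro ⟨y1, hy1, y2, hy2, y3, hy3, y4, hy4, n12, n13, n14, n23, n24, n34, heq⟩
      obtain ⟨q1, hq1, hfq1⟩ := Finset.mem_image.mp hy1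
      obtain ⟨q2, hq2, hfq2⟩ := Finset.mem_image.mp hy2
      obtain ⟨q3, hq3, hfq3⟩ := Finset.mem_image.mp hy3
      obtain ⟨q4, hq4, hfq4⟩ := Finset.mem_image.mp hy4
      refine hpar q1 hq1 q2 hq2 q3 hq3 q4 hq4
        (fun h => n12 (by rw [← hfq1, ← hfq2, h]))
        (fun h => n13 (by rw [← hfq1, ← hfq3, h]))
        (fun h => n14 (by rw [← hfq1, ← hfq4, h]))
        (fun h => n23 (by rw [← hfq2, ← hfq3, h]))
        (fun h => n24 (by rw [← hfq2, ← hfq4, h]))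
        (fun h => n34 (by rw [← hfq3, ← hfq4, h])) ?_
      show f q2 - f q1 = f q4 - f q3
      rw [hfq1, hfq2, hfq3, hfq4]
      exact heq
  refine ⟨B, hfree, hcardB, ?_⟩
  -- counting
  have hPne : P.Nonempty := Finset.card_pos.mp (by omega)
  let φ : ℂ → ℂ → ℂ := fun p a => (x.2 * p + 1) * a + x.1 * p
  let 𝒮 : ℂ → Finset (Finset ℂ) := fun p => (A.powerset.filter (SimilarFin P)).image
    (Finset.image (φ p))
  let 𝒞 : Finset (Finset ℂ) := A.image (fun a => P.image (fun p => (x.1 + x.2 * a) * p + a))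
  have hφinj : ∀ p ∈ P, Function.Injective (φ p) := by
    intro p hp a b hab
    have hz := hzp p hp
    simp only [φ] at hab
    have : (x.2 * p + 1) * a = (x.2 * p + 1) * b := by linear_combination hab
    exact mul_left_cancel₀ hz this
  have h𝒮G : ∀ p ∈ P, 𝒮 p ⊆ B.powerset.filter (SimilarFin P) := by
    intro p hp U hU
    obtain ⟨V, hV, rfl⟩ := Finset.mem_image.mp hU
    rw [Finset.mem_filter, Finset.mem_powerset] at hV ⊢
    constructor
    · intro y hy
      obtain ⟨a, haV, rfl⟩ := Finset.mem_image.mp hy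
      have : φ p a = f (a, p) := by rw [hfval]
      rw [this]
      exact hmemf (hV.1 haV) hp
    · exact hV.2.map (x.2 * p + 1) (x.1 * p) (hzp p hp)
  have hcard𝒮 : ∀ p ∈ P, (𝒮 p).card = SP P A := by
    intro p hp
    rw [SP]
    exact Finset.card_image_of_injective _ (Finset.image_injective (hφinj p hp))
  have hdisj : ∀ p₁ ∈ P, ∀ p₂ ∈ P, p₁ ≠ p₂ → Disjoint (𝒮 p₁) (𝒮 p₂) := by
    intro p₁ hp₁ p₂ hp₂ hne
    rw [Finset.disjoint_left]
    intro U hU1 hU2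
    obtain ⟨V1, hV1, h1⟩ := Finset.mem_image.mp hU1
    obtain ⟨V2, hV2, h2⟩ := Finset.mem_image.mp hU2
    rw [Finset.mem_filter] at hV1 hV2
    have hV1ne : V1.Nonempty := by
      rw [← Finset.card_pos, hV1.2.card_eq]; omega
    obtain ⟨v, hv⟩ := hV1ne
    have hv1 : φ p₁ v ∈ U := h1 ▸ Finset.mem_image_of_mem _ hv
    rw [← h2] at hv1
    obtain ⟨v', hv', hveq⟩ := Finset.mem_image.mp hv1
    have hfeq : f (v', p₂) = f (v, p₁) := by rw [hfval, hfval]; exact hveq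
    have := hptinj (v', p₂) (Finset.mem_product.mpr
        ⟨Finset.mem_powerset.mp hV2.1 hv', hp₂⟩)
      (v, p₁) (Finset.mem_product.mpr ⟨Finset.mem_powerset.mp hV1.1 hv, hp₁⟩) hfeq
    exact hne (by simpa using (Prod.ext_iff.mp this).2.symm)
  have h𝒞G : 𝒞 ⊆ B.powerset.filter (SimilarFin P) := by
    intro U hU
    obtain ⟨a, ha, rfl⟩ := Finset.mem_image.mp hU
    rw [Finset.mem_filter, Finset.mem_powerset]
    constructor
    · intro y hy
      obtain ⟨p, hp, rfl⟩ := Finset.mem_image.mp hy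
      rw [← hfval']
      exact hmemf ha hp
    · exact ⟨x.1 + x.2 * a, a, hza a ha, by rw [Finset.coe_image]⟩
  have hcard𝒞 : 𝒞.card = A.card := by
    apply Finset.card_image_of_injOn
    intro a ha a' ha' hV
    dsimp only at hV
    obtain ⟨p₀, hp₀⟩ := hPne
    have h1 : (x.1 + x.2 * a) * p₀ + a ∈ P.image (fun p => (x.1 + x.2 * a') * p + a') := by
      rw [← hV]
      exact Finset.mem_image_of_mem _ hp₀
    obtain ⟨p₁, hp₁, hpeq⟩ := Finset.mem_image.mp h1
    have hfeq : f (a', p₁) = f (a, p₀) := by rw [hfval', hfval']; exact hpeq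
    have := hptinj (a', p₁) (Finset.mem_product.mpr ⟨ha', hp₁⟩)
      (a, p₀) (Finset.mem_product.mpr ⟨ha, hp₀⟩) hfeq
    exact ((Prod.ext_iff.mp this).1).symm
  have hdisj2 : Disjoint (P.biUnion 𝒮) 𝒞 := by
    rw [Finset.disjoint_left]
    intro U hU1 hU2
    obtain ⟨p, hp, hUp⟩ := Finset.mem_biUnion.mp hU1
    obtain ⟨V, hV, h1⟩ := Finset.mem_image.mp hUp
    rw [Finset.mem_filter, Finset.mem_powerset] at hV
    obtain ⟨a, ha, h2⟩ := Finset.mem_image.mp hU2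
    obtain ⟨p₁, hp₁, p₂, hp₂, hp12⟩ := Finset.one_lt_card.mp (show 1 < P.card by omega)
    have key : ∀ p' ∈ P, p' = p := by
      intro p' hp'
      have hmem : (x.1 + x.2 * a) * p' + a ∈ U := by
        rw [← h2]
        exact Finset.mem_image_of_mem _ hp'
      rw [← h1] at hmem
      obtain ⟨v, hv, hveq⟩ := Finset.mem_image.mp hmem
      have hfeq : f (v, p) = f (a, p') := by rw [hfval, hfval']; exact hveq
      have := hptinj (v, p) (Finset.mem_product.mpr ⟨hV.1 hv, hp⟩)
        (a, p') (Finset.mem_product.mpr ⟨ha, hp'⟩) hfeq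
      exact ((Prod.ext_iff.mp this).2).symm
    exact hp12 ((key p₁ hp₁).trans (key p₂ hp₂).symm)
  have hsub : P.biUnion 𝒮 ∪ 𝒞 ⊆ B.powerset.filter (SimilarFin P) :=
    Finset.union_subset (Finset.biUnion_subset.mpr h𝒮G) h𝒞G
  calc P.card * SP P A + A.card
      = (P.biUnion 𝒮).card + 𝒞.card := by
        rw [Finset.card_biUnion hdisj, hcard𝒞,
          Finset.sum_congr rfl hcard𝒮, Finset.sum_const, smul_eq_mul]
    _ = (P.biUnion 𝒮 ∪ 𝒞).card := (Finset.card_union_of_disjoint hdisj2).symm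
    _ ≤ (B.powerset.filter (SimilarFin P)).card := Finset.card_le_card hsub
    _ = SP P B := by rw [SP]


/-- 1-dim version of the density machinery. -/
lemma dense_ne_zero1 {F : Type*} [NormedAddCommGroup F] [NormedSpace ℝ F]
    {g : ℂ → F} (hg : AnalyticOnNhd ℝ g Set.univ) (hne : ∃ x, g x ≠ 0) :
    IsOpen {x | g x ≠ 0} ∧ Dense {x | g x ≠ 0} := by
  constructor
  · have hc : Continuous g := continuousOn_univ.mp hg.continuousOn
    exact isOpen_ne.preimage hc
  · rw [dense_iff_inter_open]
    rintro U hU ⟨x₀, hx₀⟩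
    by_contra h
    push_neg at h
    have hz : ∀ y ∈ U, g y = 0 := by
      intro y hy
      by_contra hgy
      exact Set.eq_empty_iff_forall_notMem.mp h y ⟨hy, hgy⟩
    have hconn : IsPreconnected (Set.univ : Set ℂ) :=
      (convex_univ : Convex ℝ (Set.univ : Set ℂ)).isPreconnected
    have := hg.eqOn_zero_of_preconnected_of_eventuallyEq_zero hconn (Set.mem_univ x₀)
      (Filter.eventuallyEq_of_mem (hU.mem_nhds hx₀) hz)
    obtain ⟨x, hx⟩ := hne
    exact hx (this (Set.mem_univ x))

lemma analytic_affine1 (a c : ℂ) : AnalyticOnNhd ℝ (fun x : ℂ => a * x + c) Set.univ :=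
  ((analyticOnNhd_const (v := a)).mul analyticOnNhd_id).add analyticOnNhd_const

lemma pad (A : Finset ℂ) (hAf : ParallelogramFree A) :
    ∃ x, x ∉ A ∧ ParallelogramFree (insert x A) := by
  classical
  let T1 : ↥A → Set ℂ := fun y => {x | x ≠ (y : ℂ)}
  let T2 : ↥A × ↥A → Set ℂ := fun i =>
    {x | (i.1 : ℂ) ≠ (i.2 : ℂ) → (conj' ((i.2 : ℂ) - (i.1 : ℂ)) * (x - (i.1 : ℂ))).im ≠ 0}
  let T3 : ↥A × ↥A × ↥A → Set ℂ := fun i => {x | x ≠ (i.1 : ℂ) + (i.2.1 : ℂ) - (i.2.2 : ℂ)}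
  have hT1 : ∀ i, IsOpen (T1 i) ∧ Dense (T1 i) := by
    intro y
    have heq : T1 y = {x : ℂ | (1 : ℂ) * x + (-(y : ℂ)) ≠ 0} := by
      ext x
      simp only [T1, Set.mem_setOf_eq, one_mul]
      constructor
      · intro h h'; exact h (by linear_combination h')
      · intro h h'; exact h (by rw [h']; ring)
    rw [heq]
    exact dense_ne_zero1 (analytic_affine1 1 _) ⟨(y : ℂ) + 1, by simp⟩
  have hT2 : ∀ i, IsOpen (T2 i) ∧ Dense (T2 i) := by
    rintro ⟨y, z⟩
    by_cases hyz : (y : ℂ) = (z : ℂ)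
    · have huniv : T2 (y, z) = Set.univ := Set.eq_univ_of_forall (fun x h => absurd hyz h)
      rw [huniv]; exact ⟨isOpen_univ, dense_univ⟩
    · have heq : T2 (y, z) = {x : ℂ |
          (conj' ((z : ℂ) - (y : ℂ)) * (x - (y : ℂ))).im ≠ 0} := by
        ext x
        simp only [T2, Set.mem_setOf_eq]
        exact ⟨fun h => h hyz, fun h _ => h⟩
      rw [heq]
      apply dense_ne_zero1
      · have : AnalyticOnNhd ℝ (fun x : ℂ => conj' ((z : ℂ) - (y : ℂ)) * ((1 : ℂ) * x
            + (-(y : ℂ)))) Set.univ :=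
          (analyticOnNhd_const).mul (analytic_affine1 1 _)
        have h2 := Complex.imCLM.comp_analyticOnNhd this
        have heq2 : (fun x : ℂ => (conj' ((z : ℂ) - (y : ℂ)) * (x - (y : ℂ))).im)
            = (Complex.imCLM ∘ fun x : ℂ => conj' ((z : ℂ) - (y : ℂ)) * ((1 : ℂ) * x
              + (-(y : ℂ)))) := by
          funext x
          simp only [Function.comp_apply, Complex.imCLM_apply, one_mul]
          ring_nf
        rw [heq2]
        exact h2
      · refine ⟨(y : ℂ) + I * ((z : ℂ) - (y : ℂ)), ?_⟩
        have hv : ((z : ℂ) - (y : ℂ)) ≠ 0 := sub_ne_zero.mpr (Ne.symm hyz)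
        have : conj' ((z : ℂ) - (y : ℂ)) * ((y : ℂ) + I * ((z : ℂ) - (y : ℂ)) - (y : ℂ))
            = (Complex.normSq ((z : ℂ) - (y : ℂ)) : ℝ) * I := by
          rw [show ((Complex.normSq ((z : ℂ) - (y : ℂ)) : ℝ) : ℂ)
            = ((z : ℂ) - (y : ℂ)) * conj' ((z : ℂ) - (y : ℂ)) from (Complex.mul_conj _).symm]
          ring
        rw [this]
        simp [Complex.normSq_eq_zero, hv]
  have hT3 : ∀ i, IsOpen (T3 i) ∧ Dense (T3 i) := by
    rintro ⟨y, z, u⟩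
    have heq : T3 (y, z, u) = {x : ℂ |
        (1 : ℂ) * x + (-((y : ℂ) + (z : ℂ) - (u : ℂ))) ≠ 0} := by
      ext x
      simp only [T3, Set.mem_setOf_eq, one_mul]
      constructor
      · intro h h'; exact h (by linear_combination h')
      · intro h h'; exact h (by rw [h']; ring)
    rw [heq]
    exact dense_ne_zero1 (analytic_affine1 1 _) ⟨(y : ℂ) + (z : ℂ) - (u : ℂ) + 1, by
      simp only [Set.mem_setOf_eq, one_mul]
      intro h
      have : (1 : ℂ) = 0 := by linear_combination h
      simp at this⟩
  have hD : Dense ((⋂ i, T1 i) ∩ ((⋂ i, T2 i) ∩ (⋂ i, T3 i))) := by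
    have h1 : IsOpen (⋂ i, T1 i) := isOpen_iInter_of_finite (fun i => (hT1 i).1)
    have h2 : IsOpen (⋂ i, T2 i) := isOpen_iInter_of_finite (fun i => (hT2 i).1)
    exact (dense_iInter_of_isOpen (fun i => (hT1 i).1) (fun i => (hT1 i).2)).inter_of_isOpen_left
      ((dense_iInter_of_isOpen (fun i => (hT2 i).1) (fun i => (hT2 i).2)).inter_of_isOpen_left
        (dense_iInter_of_isOpen (fun i => (hT3 i).1) (fun i => (hT3 i).2)) h2) h1
  obtain ⟨x, hx1, hx2, hx3⟩ := hD.nonempty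
  have hnotA : x ∉ A := fun hxA => (Set.mem_iInter.mp hx1 ⟨x, hxA⟩) rfl
  have hline : ∀ y ∈ A, ∀ z ∈ A, y ≠ z → (conj' (z - y) * (x - y)).im ≠ 0 :=
    fun y hy z hz hne => Set.mem_iInter.mp hx2 (⟨y, hy⟩, ⟨z, hz⟩) hne
  have hcombo : ∀ y ∈ A, ∀ z ∈ A, ∀ u ∈ A, x ≠ y + z - u :=
    fun y hy z hz u hu => Set.mem_iInter.mp hx3 (⟨y, hy⟩, ⟨z, hz⟩, ⟨u, hu⟩)
  refine ⟨x, hnotA, ?_, ?_⟩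
  · -- no 3 on a line
    intro S hS hcolS
    by_contra hc
    push_neg at hc
    obtain ⟨y1, y2, y3, hy1, hy2, hy3, n12, n13, n23⟩ :=
      Finset.two_lt_card_iff.mp (show 2 < S.card by omega)
    have hcol3 : Collinear ℝ ({y1, y2, y3} : Set ℂ) := by
      apply hcolS.subset
      intro w hw
      rcases hw with rfl | rfl | rfl
      · exact hy1
      · exact hy2
      · exact hy3
    have hmem : ∀ {y : ℂ}, y ∈ S → y = x ∨ y ∈ A := by
      intro y hy
      rcases Finset.mem_insert.mp (hS hy) with h | h
      · exact Or.inl h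
      · exact Or.inr h
    rcases hmem hy1 with rfl | hA1
    · -- x = y1
      rcases hmem hy2 with rfl | hA2
      · exact n12 rfl
      rcases hmem hy3 with rfl | hA3
      · exact n13 rfl
      refine hline y2 hA2 y3 hA3 n23 ?_
      apply im_eq_zero_of_collinear
      have : Collinear ℝ ({y1, y2, y3} : Set ℂ) := hcol3
      apply this.subset
      intro w hw
      rcases hw with rfl | rfl | rfl
      · simp
      · simp
      · simp
    rcases hmem hy2 with rfl | hA2
    · rcases hmem hy3 with rfl | hA3
      · exact n23 rfl
      refine hline y1 hA1 y3 hA3 n13 ?_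
      apply im_eq_zero_of_collinear
      apply hcol3.subset
      intro w hw
      rcases hw with rfl | rfl | rfl
      · simp
      · simp
      · simp
    rcases hmem hy3 with rfl | hA3
    · refine hline y1 hA1 y2 hA2 n12 ?_
      apply im_eq_zero_of_collinear
      apply hcol3.subset
      intro w hw
      rcases hw with rfl | rfl | rfl
      · simp
      · simp
      · simp
    · exact no3_aux hAf.1 hA1 hA2 hA3 n12 n13 n23 hcol3
  · -- no parallelogram
    rintro ⟨p1, hp1, p2, hp2, p3, hp3, p4, hp4, n12, n13, n14, n23, n24, n34, heq⟩
    have hmem : ∀ {y : ℂ}, y ∈ insert x A → y = x ∨ y ∈ A := by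
      intro y hy
      rcases Finset.mem_insert.mp hy with h | h
      · exact Or.inl h
      · exact Or.inr h
    rcases hmem hp1 with rfl | hA1
    · rcases hmem hp2 with rfl | hA2
      · exact n12 rfl
      rcases hmem hp3 with rfl | hA3
      · exact n13 rfl
      rcases hmem hp4 with rfl | hA4
      · exact n14 rfl
      exact hcombo p2 hA2 p3 hA3 p4 hA4 (by linear_combination -heq)
    rcases hmem hp2 with rfl | hA2
    · rcases hmem hp3 with rfl | hA3
      · exact n23 rfl
      rcases hmem hp4 with rfl | hA4
      · exact n24 rfl
      exact hcombo p1 hA1 p4 hA4 p3 hA3 (by linear_combination heq)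
    rcases hmem hp3 with rfl | hA3
    · rcases hmem hp4 with rfl | hA4
      · exact n34 rfl
      exact hcombo p4 hA4 p1 hA1 p2 hA2 (by linear_combination heq)
    rcases hmem hp4 with rfl | hA4
    · exact hcombo p2 hA2 p3 hA3 p1 hA1 (by linear_combination -heq)
    · exact hAf.2 ⟨p1, hA1, p2, hA2, p3, hA3, p4, hA4, n12, n13, n14, n23, n24, n34, heq⟩


lemma seq (P : Finset ℂ) (hP3 : 3 ≤ P.card) (hPf : ParallelogramFree P) (k : ℕ) :
    ∃ A : Finset ℂ, ParallelogramFree A ∧ A.card = P.card ^ (k + 1) ∧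
      (k + 1) * P.card ^ k ≤ SP P A := by
  induction k with
  | zero => exact ⟨P, hPf, by rw [pow_one], by simpa using one_le_SP_self P⟩
  | succ k ih =>
    obtain ⟨A, hAf, hcard, hSP⟩ := ih
    have hAne : A.Nonempty := by
      rw [← Finset.card_pos, hcard]
      exact pow_pos (by omega) _
    obtain ⟨B, hBf, hBcard, hBSP⟩ := step P A hP3 hPf hAf hAne
    refine ⟨B, hBf, by rw [hBcard, hcard]; ring, ?_⟩
    calc (k + 1 + 1) * P.card ^ (k + 1)
        = P.card * ((k + 1) * P.card ^ k) + P.card ^ (k + 1) := by ring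
      _ ≤ P.card * SP P A + A.card := by
          rw [hcard]
          exact Nat.add_le_add_right (Nat.mul_le_mul_left _ hSP) _
      _ ≤ SP P B := hBSP

lemma pad_many (A : Finset ℂ) (hAf : ParallelogramFree A) (d : ℕ) :
    ∃ B : Finset ℂ, A ⊆ B ∧ ParallelogramFree B ∧ B.card = A.card + d := by
  induction d with
  | zero => exact ⟨A, Finset.Subset.refl A, hAf, rfl⟩
  | succ d ih =>
    obtain ⟨B, hAB, hBf, hBcard⟩ := ih
    obtain ⟨x, hx, hxf⟩ := pad B hBf
    classical
    exact ⟨insert x B, hAB.trans (Finset.subset_insert x B), hxf,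
      by rw [Finset.card_insert_of_notMem hx, hBcard]; omega⟩

/-- Lower bound for parallelogram-free sets: if `P` is a parallelogram-free pattern
with `|P| ≥ 3`, then there is `c > 0` such that for every `n ≥ |P|` there is a
parallelogram-free `n`-set `A` with `S_P(A) ≥ c·n·log n`. -/
theorem stmt19 (P : Finset ℂ) (hP : 3 ≤ P.card) (hPfree : ParallelogramFree P) :
    ∃ c : ℝ, 0 < c ∧ ∀ n : ℕ, P.card ≤ n →
      ∃ A : Finset ℂ, ParallelogramFree A ∧ A.card = n ∧
        c * (n : ℝ) * Real.log (n : ℝ) ≤ (SP P A : ℝ) := by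
  set m := P.card with hm
  have hm1 : (1 : ℝ) < (m : ℝ) := by exact_mod_cast (by omega : 1 < m)
  have hM : 0 < Real.log m := Real.log_pos hm1
  have hmpos : (0 : ℝ) < (m : ℝ) := by linarith
  refine ⟨1 / (2 * (m : ℝ) ^ 2 * Real.log m), by positivity, ?_⟩
  intro n hn
  set K := Nat.log m n with hK
  have hn0 : n ≠ 0 := by omega
  have hKpos : 1 ≤ K := Nat.log_pos (by omega) hn
  obtain ⟨A₀, hA₀f, hA₀card, hA₀SP⟩ := seq P hP hPfree (K - 1)
  have hKK : K - 1 + 1 = K := by omega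
  rw [hKK] at hA₀card hA₀SP
  rw [← hm] at hA₀card hA₀SP
  have hmKn : m ^ K ≤ n := Nat.pow_log_le_self m hn0
  have hnmK : n < m ^ (K + 1) := Nat.lt_pow_succ_log_self (by omega) n
  obtain ⟨A, hsub, hAf, hAcard⟩ := pad_many A₀ hA₀f (n - m ^ K)
  rw [hA₀card] at hAcard
  have hAn : A.card = n := by omega
  refine ⟨A, hAf, hAn, ?_⟩
  have hSP : (K * m ^ (K - 1) : ℕ) ≤ SP P A := hA₀SP.trans (SP_mono hsub)
  -- real arithmetic
  have hL0 : 0 ≤ Real.log n := Real.log_nonneg (by exact_mod_cast (by omega : 1 ≤ n))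
  have hlogn : Real.log n < (K + 1) * Real.log m := by
    calc Real.log n < Real.log ((m : ℝ) ^ (K + 1)) := by
          apply Real.log_lt_log (by exact_mod_cast Nat.pos_of_ne_zero hn0)
          exact_mod_cast hnmK
      _ = (K + 1) * Real.log m := by rw [Real.log_pow]; push_cast; ring
  have h2 : Real.log n / (2 * Real.log m) ≤ (K : ℝ) := by
    rcases le_or_gt (Real.log n) (2 * Real.log m) with h | h
    · have h1' : Real.log n / (2 * Real.log m) ≤ 1 := by
        rw [div_le_one (by positivity)]; exact h
      have h2' : (1 : ℝ) ≤ (K : ℝ) := by exact_mod_cast hKpos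
      linarith
    · have hKge : Real.log n / Real.log m - 1 ≤ (K : ℝ) := by
        rw [div_sub_one hM.ne', div_le_iff₀ hM]
        push_cast at hlogn ⊢
        linarith
      have : Real.log n / (2 * Real.log m) ≤ Real.log n / Real.log m - 1 := by
        rw [div_sub_one hM.ne', div_le_div_iff₀ (by positivity) hM]
        nlinarith [hM, h, mul_pos hM hM]
      linarith
  have h3 : (n : ℝ) / (m : ℝ) ^ 2 ≤ (m : ℝ) ^ (K - 1) := by
    rw [div_le_iff₀ (pow_pos hmpos 2)]
    have : (n : ℝ) < (m : ℝ) ^ (K + 1) := by exact_mod_cast hnmK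
    calc (n : ℝ) ≤ (m : ℝ) ^ (K + 1) := this.le
      _ = (m : ℝ) ^ (K - 1) * (m : ℝ) ^ 2 := by
          rw [← pow_add]
          congr 1
          omega
  calc 1 / (2 * (m : ℝ) ^ 2 * Real.log m) * n * Real.log n
      = (Real.log n / (2 * Real.log m)) * ((n : ℝ) / (m : ℝ) ^ 2) := by
        field_simp
    _ ≤ (K : ℝ) * (m : ℝ) ^ (K - 1) := by
        apply mul_le_mul h2 h3 (div_nonneg (Nat.cast_nonneg _) (pow_nonneg (Nat.cast_nonneg _) _)) (Nat.cast_nonneg _)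
    _ = ((K * m ^ (K - 1) : ℕ) : ℝ) := by push_cast; ring
    _ ≤ (SP P A : ℝ) := by exact_mod_cast hSP
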